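/- Pliss Lemma: Let a_1,...,a_n be real numbers all bounded above by b, and suppose that (1/n)·Σ_{i=1}^n a_i ≥ c for some c < b. Then for any c' < c there exist l indices 1 ≤ i_1 < i_2 < ... < i_l ≤ n such that for every k = 1,...,l and every j with 1 ≤ j ≤ i_k one has Σ_{i=j}^{i_k} a_i ≥ (i_k - j + 1)·c'. Moreover l/n ≥ (c - c')/(b - c'). -/
import Mathlib

/-- Pliss Lemma. -/
theorem pliss_lemma (n : ℕ) (hn : 0 < n) (a : ℕ → ℝ) (b c c' : ℝ)
    (hb : ∀ i ∈ Finset.Icc 1 n, a i ≤ b) (hcb : c < b) (hc' : c' < c)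
    (havg : (n : ℝ) * c ≤ ∑ i ∈ Finset.Icc 1 n, a i) :
    ∃ s : Finset ℕ, s ⊆ Finset.Icc 1 n ∧
      (∀ ik ∈ s, ∀ j, 1 ≤ j → j ≤ ik →
        ((ik : ℝ) - (j : ℝ) + 1) * c' ≤ ∑ i ∈ Finset.Icc j ik, a i) ∧
      (c - c') / (b - c') ≤ (s.card : ℝ) / (n : ℝ) := by
  classical
  set S : ℕ → ℝ := fun m => (∑ i ∈ Finset.Icc 1 m, a i) - m * c' with hSdef
  have hS0 : S 0 = 0 := by simp [hSdef]
  have hsplit : ∀ j ik : ℕ, 1 ≤ j → j ≤ ik →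
      (∑ i ∈ Finset.Icc 1 ik, a i)
        = (∑ i ∈ Finset.Icc 1 (j-1), a i) + ∑ i ∈ Finset.Icc j ik, a i := by
    intro j ik hj hjik
    rw [← Finset.Ico_add_one_right_eq_Icc 1 ik, ← Finset.Ico_add_one_right_eq_Icc 1 (j-1), ← Finset.Ico_add_one_right_eq_Icc j ik]
    simp only [Nat.succ_eq_add_one, Nat.sub_add_cancel hj]
    exact (Finset.sum_Ico_consecutive _ hj (Nat.le_succ_of_le hjik)).symm
  have hSstep : ∀ m : ℕ, m + 1 ≤ n → S (m+1) - S m = a (m+1) - c' := by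
    intro m hm
    have : (∑ i ∈ Finset.Icc 1 (m+1), a i) = (∑ i ∈ Finset.Icc 1 m, a i) + a (m+1) :=
      Finset.sum_Icc_succ_top (Nat.succ_le_succ (Nat.zero_le m)) a
    simp only [hSdef]
    rw [this]
    push_cast
    ring
  set s : Finset ℕ := (Finset.Icc 1 n).filter (fun m => ∀ j < m, S j ≤ S m) with hsdef
  have hsub : s ⊆ Finset.Icc 1 n := Finset.filter_subset _ _
  refine ⟨s, hsub, ?_, ?_⟩
  · intro ik hik j hj hjik
    obtain ⟨-, hrec⟩ := Finset.mem_filter.mp hik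
    have hlt : j - 1 < ik := lt_of_lt_of_le (Nat.sub_lt hj one_pos) hjik
    have h1 : S (j-1) ≤ S ik := hrec _ hlt
    have hsp := hsplit j ik hj hjik
    have hcast : ((j - 1 : ℕ) : ℝ) = (j : ℝ) - 1 := by
      push_cast [Nat.cast_sub hj]; ring
    simp only [hSdef] at h1
    rw [hsp, hcast] at h1
    nlinarith [h1]
  · -- counting
    let M : ℕ → ℝ := fun m => Nat.rec (S 0) (fun k Mk => max Mk (S (k+1))) m
    have hM0 : M 0 = 0 := hS0
    have hMsucc : ∀ m, M (m+1) = max (M m) (S (m+1)) := fun _ => rfl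
    have hSM : ∀ m, ∀ j ≤ m, S j ≤ M m := by
      intro m
      induction m with
      | zero => intro j hj; interval_cases j; simp [hM0, hS0]
      | succ k ih =>
        intro j hj
        rw [hMsucc]
        rcases eq_or_lt_of_le hj with h | h
        · rw [h]; exact le_max_right _ _
        · exact le_trans (ih j (Nat.lt_succ_iff.mp h)) (le_max_left _ _)
    have hbc' : (0:ℝ) < b - c' := by linarith
    have hstep : ∀ m ∈ Finset.range n,
        M (m+1) - M m ≤ (if (m+1) ∈ s then b - c' else 0) := by
      intro m hm
      have hmn : m + 1 ≤ n := Finset.mem_range.mp hm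
      rcases le_or_gt (S (m+1)) (M m) with hcase | hcase
      · have hMeq : M (m+1) = M m := by rw [hMsucc]; exact max_eq_left hcase
        have hnn : (0:ℝ) ≤ if (m+1) ∈ s then b - c' else 0 := by
          split <;> linarith
        rw [hMeq]; linarith
      · have hMeq : M (m+1) = S (m+1) := by rw [hMsucc]; exact max_eq_right (le_of_lt hcase)
        have hmem : (m+1) ∈ s := by
          refine Finset.mem_filter.mpr ⟨Finset.mem_Icc.mpr ⟨Nat.succ_le_succ (Nat.zero_le m), hmn⟩, ?_⟩
          intro j hj
          exact le_of_lt (lt_of_le_of_lt (hSM m j (Nat.lt_succ_iff.mp hj)) hcase)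
        rw [if_pos hmem, hMeq]
        have h1 : S m ≤ M m := hSM m m le_rfl
        have h2 := hSstep m hmn
        have h3 : a (m+1) ≤ b := hb _ (Finset.mem_Icc.mpr ⟨Nat.succ_le_succ (Nat.zero_le m), hmn⟩)
        linarith
    have htel : M n = ∑ m ∈ Finset.range n, (M (m+1) - M m) := by
      rw [Finset.sum_range_sub, hM0, sub_zero]
    have hsum1 : ∑ m ∈ Finset.range n, (if (m+1) ∈ s then b - c' else 0)
        = ∑ k ∈ Finset.Icc 1 n, (if k ∈ s then b - c' else 0) := by
      rw [← Finset.Ico_add_one_right_eq_Icc 1 n, Finset.sum_Ico_eq_sum_range]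
      simp [add_comm 1]
    have hsum2 : ∑ k ∈ Finset.Icc 1 n, (if k ∈ s then b - c' else 0)
        = (s.card : ℝ) * (b - c') := by
      rw [Finset.sum_ite_mem, Finset.inter_eq_right.mpr hsub, Finset.sum_const, nsmul_eq_mul]
    have hMn : M n ≤ (s.card : ℝ) * (b - c') := by
      rw [htel, ← hsum2, ← hsum1]
      exact Finset.sum_le_sum hstep
    have hSn : (n : ℝ) * (c - c') ≤ S n := by
      simp only [hSdef]
      nlinarith [havg]
    have hfinal : (n : ℝ) * (c - c') ≤ (s.card : ℝ) * (b - c') :=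
      le_trans hSn (le_trans (hSM n n le_rfl) hMn)
    have hnpos : (0:ℝ) < n := by exact_mod_cast hn
    rw [div_le_div_iff₀ hbc' hnpos]
    nlinarith [hfinal]
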